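/- The sum over j from 0 to n of C(n+j, j) * C(n, j) * ((x-1)/2)^j equals the n-th Legendre polynomial evaluated at x. -/

import Mathlib

open Polynomial

/-- The `n`-th Legendre polynomial, defined by Rodrigues' formula
`P_n(x) = (1/(2^n n!)) dⁿ/dxⁿ [(x²-1)ⁿ]`. -/
noncomputable def legendre (n : ℕ) : Polynomial ℝ :=
  C ((1 : ℝ) / (2 ^ n * n.factorial)) * derivative^[n] ((X ^ 2 - 1) ^ n)

lemma vandermonde' (n j : ℕ) :
    (n + j).choose j = ∑ k ∈ Finset.range (j + 1), n.choose k * j.choose k := by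
  rw [Nat.add_choose_eq, Finset.Nat.sum_antidiagonal_eq_sum_range_succ_mk]
  refine Finset.sum_congr rfl fun k hk => ?_
  rw [Nat.choose_symm (Nat.lt_succ_iff.mp (Finset.mem_range.mp hk))]

lemma key (n j : ℕ) :
    (∑ k ∈ Finset.range (n + 1),
      if k ≤ j then n.choose k ^ 2 * (n - k).choose (j - k) else 0) =
      (n + j).choose j * n.choose j := by
  rcases le_or_gt j n with hj | hj
  · have hsub : Finset.range (j + 1) ⊆ Finset.range (n + 1) :=
      Finset.range_subset_range.mpr (by omega)
    rw [← Finset.sum_subset hsub (fun k hk hk' => if_neg (by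
      simp only [Finset.mem_range] at hk hk'; omega))]
    calc ∑ k ∈ Finset.range (j + 1),
          (if k ≤ j then n.choose k ^ 2 * (n - k).choose (j - k) else 0)
        = ∑ k ∈ Finset.range (j + 1), n.choose j * (n.choose k * j.choose k) := by
          refine Finset.sum_congr rfl fun k hk => ?_
          have hk' : k ≤ j := Nat.lt_succ_iff.mp (Finset.mem_range.mp hk)
          rw [if_pos hk', pow_two, mul_assoc, ← Nat.choose_mul hk']
          ring
      _ = (n + j).choose j * n.choose j := by
          rw [← Finset.mul_sum, ← vandermonde']; ring
  · rw [Nat.choose_eq_zero_of_lt hj, mul_zero]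
    refine Finset.sum_eq_zero fun k hk => ?_
    have hk' : k ≤ n := Nat.lt_succ_iff.mp (Finset.mem_range.mp hk)
    rw [if_pos (by omega),
      show (n - k).choose (j - k) = 0 from Nat.choose_eq_zero_of_lt (by omega), mul_zero]

lemma poly_eq (n : ℕ) :
    (∑ j ∈ Finset.range (n + 1),
        C (((n + j).choose j * n.choose j : ℕ) : ℝ) * X ^ j) =
      ∑ k ∈ Finset.range (n + 1),
        C ((n.choose k : ℝ) ^ 2) * ((1 + X) ^ (n - k) * X ^ k) := by
  ext j
  rw [Polynomial.finset_sum_coeff, Polynomial.finset_sum_coeff]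
  have hL : ∀ x ∈ Finset.range (n + 1),
      (C (((n + x).choose x * n.choose x : ℕ) : ℝ) * X ^ x).coeff j
        = if x = j then (((n + x).choose x * n.choose x : ℕ) : ℝ) else 0 := by
    intro x _
    rw [Polynomial.coeff_C_mul, Polynomial.coeff_X_pow]
    split <;> rename_i h
    · rw [if_pos h.symm, mul_one]
    · rw [if_neg (fun hh => h hh.symm), mul_zero]
  have hRt : ∀ x ∈ Finset.range (n + 1),
      (C ((n.choose x : ℝ) ^ 2) * ((1 + X) ^ (n - x) * X ^ x)).coeff j
        = ((if x ≤ j then n.choose x ^ 2 * (n - x).choose (j - x) else 0 : ℕ) : ℝ) := by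
    intro x _
    rw [Polynomial.coeff_C_mul, Polynomial.coeff_mul_X_pow',
      Polynomial.coeff_one_add_X_pow]
    split <;> push_cast <;> ring
  rw [Finset.sum_congr rfl hL, Finset.sum_ite_eq' (Finset.range (n + 1)) j,
    Finset.sum_congr rfl hRt, ← Nat.cast_sum, key]
  split
  · rfl
  · rename_i h
    rw [show n.choose j = 0 from Nat.choose_eq_zero_of_lt (by
      simp only [Finset.mem_range] at h; omega), mul_zero, Nat.cast_zero]

lemma legendre_eval (n : ℕ) (x : ℝ) :
    (legendre n).eval x
      = ∑ k ∈ Finset.range (n + 1),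
          (n.choose k : ℝ) ^ 2 * ((1 + (x - 1) / 2) ^ (n - k) * ((x - 1) / 2) ^ k) := by
  have hfac : ((X : ℝ[X]) ^ 2 - 1) ^ n = (X + C (-1 : ℝ)) ^ n * (X + C (1 : ℝ)) ^ n := by
    rw [← mul_pow]
    congr 1
    simp only [map_neg, map_one]
    ring
  rw [legendre, hfac, Polynomial.iterate_derivative_mul]
  simp only [Polynomial.iterate_derivative_X_add_pow]
  rw [eval_mul, eval_C, Polynomial.eval_finset_sum, Finset.mul_sum]
  refine Finset.sum_congr rfl fun k hk => ?_
  have hk' : k ≤ n := Nat.lt_succ_iff.mp (Finset.mem_range.mp hk)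
  have hsub : n - (n - k) = k := Nat.sub_sub_self hk'
  simp only [eval_smul, smul_eq_mul, eval_mul, eval_pow, eval_add, eval_X, eval_C,
    Polynomial.eval_natCast, nsmul_eq_mul, hsub]
  have hd1 : (n.descFactorial (n - k) : ℝ) = (n - k).factorial * n.choose k := by
    rw [Nat.descFactorial_eq_factorial_mul_choose, Nat.choose_symm hk']; push_cast; ring
  have hd2 : (n.descFactorial k : ℝ) = k.factorial * n.choose k := by
    rw [Nat.descFactorial_eq_factorial_mul_choose]; push_cast; ring
  have hf : (n.factorial : ℝ) = n.choose k * k.factorial * (n - k).factorial := by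
    rw [← Nat.choose_mul_factorial_mul_factorial hk']; push_cast; ring
  have h2 : (2 : ℝ) ^ n = 2 ^ k * 2 ^ (n - k) := by
    rw [← pow_add, Nat.add_sub_cancel' hk']
  have h1 : (1 : ℝ) + (x - 1) / 2 = (x + 1) / 2 := by ring
  rw [hd1, hd2, hf, h2, h1]
  have hkf : (k.factorial : ℝ) ≠ 0 := Nat.cast_ne_zero.mpr k.factorial_ne_zero
  have hnkf : ((n - k).factorial : ℝ) ≠ 0 := Nat.cast_ne_zero.mpr (n - k).factorial_ne_zero
  have hc : (n.choose k : ℝ) ≠ 0 := Nat.cast_ne_zero.mpr (Nat.choose_pos hk').ne'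
  have h2k : (2 : ℝ) ^ k ≠ 0 := by positivity
  have h2nk : (2 : ℝ) ^ (n - k) ≠ 0 := by positivity
  rw [div_pow, div_pow]
  field_simp
  ring

/-- `∑_{j=0}^{n} C(n+j, j) * C(n, j) * ((x-1)/2)^j` equals the `n`-th Legendre
polynomial evaluated at `x`. -/
theorem sum_faces_eq_legendre (n : ℕ) (x : ℝ) :
    ∑ j ∈ Finset.range (n + 1),
      ((n + j).choose j * n.choose j : ℝ) * ((x - 1) / 2) ^ j =
      (legendre n).eval x := by
  have h := congrArg (Polynomial.eval ((x - 1) / 2)) (poly_eq n)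
  simp only [Polynomial.eval_finset_sum, eval_mul, eval_pow, eval_C, eval_X, eval_add,
    eval_one] at h
  push_cast at h
  rw [legendre_eval n x, ← h]
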